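/- arXiv:1111.0762 — 2 statements merged into one kernel-verified Lean document; each statement's English description precedes it below -/
import Mathlib

section
/- For the symmetric two-choice probabilities p_i = (2i−1)/n² and every nonincreasing state s, for all sufficiently large n: ∑_{i=1}^n (p_i(α f* + 1/n + S α²) − α f*/n) · e^{α s_i}/(n² + i) ≤ (α f* + 2 S α²) · Φ(s)/n. -/
open Real Finset MeasureTheory

/-- Nonincreasing rearrangement of a tuple of reals. -/
noncomputable def sortDesc {n : ℕ} (r : Fin n → ℝ) : Fin n → ℝ :=
  fun i => r (Tuple.sort r i.rev)

/-- State update when a ball of total weight `x` lands in bin `j`. -/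
noncomputable def updW (n : ℕ) (x : ℝ) (s : Fin n → ℝ) (j : Fin n) : Fin n → ℝ :=
  fun i => if i = j then s i + x * (1 - 1 / n) else s i - x / n

/-- Weighted-case potential Φ(s) = ∑_{i=1}^n e^{α s_i} / (n² + i). -/
noncomputable def PhiW (n : ℕ) (α : ℝ) (s : Fin n → ℝ) : ℝ :=
  ∑ i : Fin n, Real.exp (α * s i) / ((n : ℝ) ^ 2 + i.1 + 1)

/-- Weighted-case potential Ψ(s) = ∑_{i=1}^n e^{-α s_i} / (n² + n − i + 1). -/
noncomputable def PsiW (n : ℕ) (α : ℝ) (s : Fin n → ℝ) : ℝ :=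
  ∑ i : Fin n, Real.exp (-α * s i) / ((n : ℝ) ^ 2 + (n : ℝ) - i.1)

/-- Weighted-case potential Γ(s) = Φ(s) + Ψ(s). -/
noncomputable def GammaW (n : ℕ) (α : ℝ) (s : Fin n → ℝ) : ℝ :=
  PhiW n α s + PsiW n α s

private lemma sum_odd_fin (n : ℕ) : ∑ i : Fin n, ((2 * i.1 + 1 : ℝ)) = (n : ℝ) ^ 2 := by
  induction n with
  | zero => simp
  | succ m ih =>
    rw [Fin.sum_univ_castSucc]
    simp only [Fin.coe_castSucc, Fin.val_last]
    rw [ih]; push_cast; ring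

/-- Corollary `cor-phi-gen-w`: for the two-choice probabilities
`p_i = (2i−1)/n²` and any nonincreasing state `s`,
`∑ i (p_i(αf* + 1/n + Sα²) − αf*/n) e^{αs_i}/(n²+i) ≤ (αf* + 2Sα²)Φ(s)/n`. -/
theorem stmt11 (fstar lam S ε : ℝ) (hfstar1 : 1 ≤ fstar)
    (hlam : 0 < lam) (hS : 1 ≤ S) (hε0 : 0 < ε) (hε1 : ε ≤ 1 / 4)
    (α : ℝ) (hα : α = min (ε / (6 * S)) (min (lam / 2) (ε / (2 * fstar)))) :
    ∃ N : ℕ, ∀ n : ℕ, N ≤ n →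
      ∀ s : Fin n → ℝ,
        (∀ i j : Fin n, i ≤ j → s j ≤ s i) → (∑ i, s i = 0) →
        ∑ i : Fin n,
            ((2 * i.1 + 1 : ℝ) / (n : ℝ) ^ 2 *
                (α * fstar + 1 / n + S * α ^ 2) - α * fstar / n) *
              Real.exp (α * s i) / ((n : ℝ) ^ 2 + i.1 + 1) ≤
          (α * fstar + 2 * S * α ^ 2) * PhiW n α s / n := by
  have hf0 : (0 : ℝ) < fstar := lt_of_lt_of_le one_pos hfstar1
  have hS0 : (0 : ℝ) < S := lt_of_lt_of_le one_pos hS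
  have hα0 : 0 < α := by
    rw [hα]
    exact lt_min (by positivity) (lt_min (by positivity) (by positivity))
  have hαf0 : 0 < α * fstar := mul_pos hα0 hf0
  refine ⟨max 1 ⌈(α * fstar)⁻¹⌉₊, fun n hn s hmono _ => ?_⟩
  have hn1 : 1 ≤ n := le_trans (le_max_left _ _) hn
  have hnR : (1 : ℝ) ≤ (n : ℝ) := by exact_mod_cast hn1
  have hnR0 : (0 : ℝ) < (n : ℝ) := lt_of_lt_of_le one_pos hnR
  have hinv : 1 / (n : ℝ) ≤ α * fstar := by
    have h1 : ((α * fstar)⁻¹ : ℝ) ≤ (n : ℝ) := by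
      refine le_trans (Nat.le_ceil _) ?_
      exact_mod_cast le_trans (le_max_right _ _) hn
    rw [div_le_iff₀ hnR0]
    calc (1 : ℝ) = (α * fstar) * (α * fstar)⁻¹ := by
          rw [mul_inv_cancel₀ (ne_of_gt hαf0)]
      _ ≤ (α * fstar) * n := by
          exact mul_le_mul_of_nonneg_left h1 hαf0.le
  set A : ℝ := α * fstar + 1 / n + S * α ^ 2 with hA_def
  have hA0 : 0 ≤ A := by positivity
  set d : Fin n → ℝ := fun i =>
    (2 * i.1 + 1 : ℝ) / (n : ℝ) ^ 2 * A - α * fstar / n - (α * fstar + 2 * S * α ^ 2) / n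
    with hd_def
  set c : Fin n → ℝ := fun i => Real.exp (α * s i) / ((n : ℝ) ^ 2 + i.1 + 1) with hc_def
  have hc_anti : ∀ i j : Fin n, i ≤ j → c j ≤ c i := by
    intro i j hij
    simp only [hc_def]
    refine div_le_div₀ (Real.exp_pos _).le ?_ (by positivity) ?_
    · exact Real.exp_le_exp.2 (mul_le_mul_of_nonneg_left (hmono i j hij) hα0.le)
    · have : (i.1 : ℝ) ≤ (j.1 : ℝ) := by exact_mod_cast hij
      linarith
  have hd_mono : ∀ i j : Fin n, i ≤ j → d i ≤ d j := by
    intro i j hij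
    simp only [hd_def]
    have hij' : (i.1 : ℝ) ≤ (j.1 : ℝ) := by exact_mod_cast hij
    have : (2 * i.1 + 1 : ℝ) / (n : ℝ) ^ 2 * A ≤ (2 * j.1 + 1 : ℝ) / (n : ℝ) ^ 2 * A := by
      gcongr
    linarith
  have hanti : Antivary d c := by
    intro i j hcij
    have hji : j ≤ i := by
      by_contra h
      push_neg at h
      exact absurd (hc_anti i j h.le) (not_le.2 hcij)
    exact hd_mono j i hji
  have hcard := hanti.card_mul_sum_le_sum_mul_sum
  have hsum_d : ∑ i : Fin n, d i = A - (2 * (α * fstar) + 2 * S * α ^ 2) := by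
    simp only [hd_def]
    rw [Finset.sum_sub_distrib, Finset.sum_sub_distrib, Finset.sum_const, Finset.sum_const,
      ← Finset.sum_mul, ← Finset.sum_div, sum_odd_fin]
    simp only [Finset.card_univ, Fintype.card_fin, nsmul_eq_mul]
    rw [div_self (by positivity : ((n : ℝ) ^ 2) ≠ 0)]
    field_simp
    ring
  have hsumd_le : ∑ i : Fin n, d i ≤ 0 := by
    rw [hsum_d, hA_def]
    have : 0 ≤ S * α ^ 2 := by positivity
    linarith
  have hsumc_nn : 0 ≤ ∑ i : Fin n, c i := by
    refine Finset.sum_nonneg fun i _ => ?_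
    simp only [hc_def]
    positivity
  have hkey : ∑ i : Fin n, d i * c i ≤ 0 := by
    have h2 : (∑ i : Fin n, d i) * ∑ i : Fin n, c i ≤ 0 :=
      mul_nonpos_of_nonpos_of_nonneg hsumd_le hsumc_nn
    have h3 : (Fintype.card (Fin n) : ℝ) * ∑ i : Fin n, d i * c i ≤ 0 := le_trans hcard h2
    rw [Fintype.card_fin] at h3
    nlinarith [h3, hnR]
  have hPhi : PhiW n α s = ∑ i : Fin n, c i := by
    simp only [PhiW, hc_def]
  calc ∑ i : Fin n,
        ((2 * i.1 + 1 : ℝ) / (n : ℝ) ^ 2 * (α * fstar + 1 / n + S * α ^ 2) - α * fstar / n) *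
          Real.exp (α * s i) / ((n : ℝ) ^ 2 + i.1 + 1)
      = (∑ i : Fin n, d i * c i) + (α * fstar + 2 * S * α ^ 2) / n * ∑ i : Fin n, c i := by
        rw [Finset.mul_sum, ← Finset.sum_add_distrib]
        refine Finset.sum_congr rfl fun i _ => ?_
        simp only [hd_def, hc_def, hA_def]
        ring
    _ ≤ (α * fstar + 2 * S * α ^ 2) / n * ∑ i : Fin n, c i := by linarith
    _ = (α * fstar + 2 * S * α ^ 2) * PhiW n α s / n := by
        rw [hPhi]; ring
end

section
/- In the (1+β)-choice-type multidimensional process, if the sorted state s satisfies s_{⌈γ₂ n⌉} ≤ 0, then for all sufficiently large n the one-step expectation of Φ satisfies ∑_{j=1}^n p_j Φ(sort(r^(j))) ≤ (1 − ε²/(4n)) · Φ(s) + 1. -/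
open Real Finset

/-- State update when a ball of total load `f` lands in bin `j`. -/
noncomputable def upd (n f : ℕ) (s : Fin n → ℝ) (j : Fin n) : Fin n → ℝ :=
  fun i => if i = j then s i + (f : ℝ) * (1 - 1 / n) else s i - (f : ℝ) / n

/-- Potential Φ(s) = ∑_{i=1}^n e^{α s_i}. -/
noncomputable def PhiB (n : ℕ) (α : ℝ) (s : Fin n → ℝ) : ℝ :=
  ∑ i : Fin n, Real.exp (α * s i)

/-- Potential Ψ(s) = ∑_{i=1}^n e^{-α s_i}. -/
noncomputable def PsiB (n : ℕ) (α : ℝ) (s : Fin n → ℝ) : ℝ :=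
  ∑ i : Fin n, Real.exp (-α * s i)

/-- Potential Γ(s) = Φ(s) + Ψ(s). -/
noncomputable def GammaB (n : ℕ) (α : ℝ) (s : Fin n → ℝ) : ℝ :=
  PhiB n α s + PsiB n α s

lemma exp_quad_bound {x : ℝ} (hx : |x| ≤ 1) : Real.exp x ≤ 1 + x + 3/4 * x^2 := by
  have h := Real.exp_bound hx (n := 2) (by norm_num)
  have hs : ∑ m ∈ Finset.range 2, x ^ m / m.factorial = 1 + x := by
    simp [Finset.sum_range_succ]
  rw [hs] at h
  have h2 := (abs_sub_le_iff.mp h).1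
  have h3 : |x| ^ 2 = x ^ 2 := sq_abs x
  rw [h3] at h2
  norm_num [Nat.factorial] at h2
  linarith

lemma phi_sortDesc {n : ℕ} (α : ℝ) (r : Fin n → ℝ) : PhiB n α (sortDesc r) = PhiB n α r := by
  unfold PhiB sortDesc
  exact Fintype.sum_equiv ((Fin.revPerm).trans (Tuple.sort r)) _ _ (fun i => rfl)

lemma phi_upd_eq {n f : ℕ} (α : ℝ) (s : Fin n → ℝ) (j : Fin n) :
    PhiB n α (upd n f s j) = Real.exp (-(α * f) / n) * PhiB n α s
      + (Real.exp (α * f * (1 - 1/n)) - Real.exp (-(α * f) / n)) * Real.exp (α * s j) := by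
  unfold PhiB upd
  have key : ∀ i : Fin n, Real.exp (α * (if i = j then s i + (f:ℝ) * (1 - 1/n) else s i - (f:ℝ)/n))
      = Real.exp (-(α * f) / n) * Real.exp (α * s i)
        + (if i = j then (Real.exp (α * f * (1 - 1/n)) - Real.exp (-(α * f) / n)) * Real.exp (α * s j) else 0) := by
    intro i
    by_cases h : i = j
    · subst h
      rw [if_pos rfl, if_pos rfl]
      have e1 : Real.exp (α * (s i + (f:ℝ) * (1 - 1/n)))
          = Real.exp (α * f * (1 - 1/n)) * Real.exp (α * s i) := by
        rw [← Real.exp_add]; congr 1; ring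
      rw [e1]; ring
    · rw [if_neg h, if_neg h, add_zero]
      rw [← Real.exp_add]; congr 1; ring
  rw [Finset.sum_congr rfl (fun i _ => key i), Finset.sum_add_distrib, ← Finset.mul_sum,
    Finset.sum_ite_eq' Finset.univ j]
  simp

lemma aux_delta_pos {a γ₂ ε : ℝ} (ha : a = ε / 2) (hε0 : 0 < ε) (hγ2 : 1/2 < γ₂) (h2 : γ₂ < 1) :
    0 < (1 - a) * γ₂ - (γ₂ - ε) * (1 + 3/4*a) := by
  rw [ha]
  nlinarith [mul_pos hε0 (by linarith : (0:ℝ) < 1 - γ₂)]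

lemma aux_rhs {a γ₂ ε nr y : ℝ} (ha0 : 0 < a) (hy0 : 0 ≤ y)
    (hCδ : 3*a/4*γ₂ + (1-a) ≤ ((1 - a) * γ₂ - (γ₂ - ε) * (1 + 3/4*a)) * nr) :
    (γ₂-ε)*a*nr + 3/4*a^2*(γ₂-ε)*nr + 3/4*γ₂*a^2 - 3/4*y*a ≤ (a - a^2) * (γ₂*nr - 1) := by
  nlinarith [mul_le_mul_of_nonneg_left hCδ ha0.le, mul_nonneg hy0 ha0.le]

lemma aux_scalar {q x y a nr : ℝ} (hq0 : 0 ≤ q) (hq1 : q ≤ 1) (hx0 : 0 ≤ x) (hxa : x ≤ a)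
    (hy0 : 0 ≤ y) (hxy : x + y = a) (hynr : y = a / nr)
    (hpoly : q*a + 3/4*y^2 + 3/4*a^2*q ≤ a/nr - a^2/nr)
    (hEy : Real.exp (-y) ≤ 1 - y + 3/4 * y^2) (hEx : Real.exp x ≤ 1 + x + 3/4 * x^2) :
    Real.exp (-y) + (Real.exp x - Real.exp (-y)) * q ≤ 1 - a^2/nr := by
  have f1 := mul_le_mul_of_nonneg_right hEy (sub_nonneg.mpr hq1)
  have f2 := mul_le_mul_of_nonneg_right hEx hq0
  have hx2 : x^2 ≤ a^2 := by nlinarith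
  have hqx2 : q * x^2 ≤ q * a^2 := mul_le_mul_of_nonneg_left hx2 hq0
  nlinarith [mul_nonneg hq0 (sq_nonneg y)]

set_option maxHeartbeats 1000000 in
/-- Lemma `lemma-phi-easy-case-beta`: in the (1+β)-choice-type process, if
`s_{⌈γ₂ n⌉} ≤ 0` then `∑_j p_j Φ(sort(r^(j))) ≤ (1 − ε²/(4n)) Φ(s) + 1` for all
sufficiently large `n`. -/
theorem stmt17 (f : ℕ) (hf : 0 < f) (ε θ γ₁ γ₂ γ₃ γ₄ : ℝ)
    (hε0 : 0 < ε) (hε1 : ε ≤ 1 / 4) (hθ : 1 < θ)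
    (hγ₁ : 0 < γ₁) (h13 : γ₁ < γ₃) (h3 : γ₃ < 1 / 2) (h4 : (1 : ℝ) / 2 < γ₄)
    (h42 : γ₄ < γ₂) (h2 : γ₂ < 1) (hθγ : θ * γ₁ = 1) (h12 : γ₁ + γ₂ = 1)
    (h34 : γ₃ + γ₄ = 1) (α : ℝ) (hα : α = ε / (2 * f)) :
    ∃ N : ℕ, ∀ n : ℕ, N ≤ n →
      ∀ p s : Fin n → ℝ,
        (∀ i, 0 ≤ p i) → Monotone p → (∑ i, p i = 1) →
        (∀ k : Fin n, k.1 + 1 = ⌈γ₃ * (n : ℝ)⌉₊ → p k ≤ (1 - θ * ε) / n) →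
        (∀ k : Fin n, k.1 + 1 = ⌈γ₄ * (n : ℝ)⌉₊ → (1 + θ * ε) / n ≤ p k) →
        (∑ i ∈ Finset.univ.filter (fun i : Fin n => i.1 + 1 < ⌈γ₂ * (n : ℝ)⌉₊),
            p i ≤ γ₂ - ε) →
        (γ₂ + ε ≤
          ∑ i ∈ Finset.univ.filter (fun i : Fin n => ⌈γ₁ * (n : ℝ)⌉₊ ≤ i.1 + 1),
            p i) →
        (∀ i j : Fin n, i ≤ j → s j ≤ s i) → (∑ i, s i = 0) →
        (∀ k : Fin n, k.1 + 1 = ⌈γ₂ * (n : ℝ)⌉₊ → s k ≤ 0) →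
        ∑ j : Fin n, p j * PhiB n α (sortDesc (upd n f s j)) ≤
          (1 - ε ^ 2 / (4 * n)) * PhiB n α s + 1 := by
  have hγ2pos : (0:ℝ) < γ₂ := by linarith
  have hγε0 : (0:ℝ) ≤ γ₂ - ε := by linarith
  set a : ℝ := ε / 2 with ha_def
  have ha0 : 0 < a := by rw [ha_def]; linarith
  have ha8 : a ≤ 1/8 := by rw [ha_def]; linarith
  have hδ'pos : 0 < (1 - a) * γ₂ - (γ₂ - ε) * (1 + 3/4*a) :=
    aux_delta_pos ha_def hε0 (by linarith) h2
  refine ⟨⌈max (4/γ₂) ((3*a/4*γ₂ + (1-a)) / ((1 - a) * γ₂ - (γ₂ - ε) * (1 + 3/4*a)))⌉₊ + 1, ?_⟩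
  intro n hn p s hp0 hpmono hpsum hp3 hp4 hp2 hp1 hs_mono hs_sum hs_k
  have hn1 : 1 ≤ n := le_trans (Nat.le_add_left 1 _) hn
  have hnR : (1:ℝ) ≤ n := by exact_mod_cast hn1
  have hn0 : (0:ℝ) < n := by linarith
  have hnmax : max (4/γ₂) ((3*a/4*γ₂ + (1-a)) / ((1 - a) * γ₂ - (γ₂ - ε) * (1 + 3/4*a))) ≤ (n:ℝ) := by
    have h1 := Nat.le_ceil (max (4/γ₂) ((3*a/4*γ₂ + (1-a)) / ((1 - a) * γ₂ - (γ₂ - ε) * (1 + 3/4*a))))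
    have h2' : (⌈max (4/γ₂) ((3*a/4*γ₂ + (1-a)) / ((1 - a) * γ₂ - (γ₂ - ε) * (1 + 3/4*a)))⌉₊ : ℝ) ≤ n := by
      exact_mod_cast le_trans (Nat.le_succ _) hn
    linarith
  have hn4 : 4 ≤ γ₂ * n := by
    have h := le_trans (le_max_left _ _) hnmax
    rw [div_le_iff₀ hγ2pos] at h; linarith
  have hCδ : 3*a/4*γ₂ + (1-a) ≤ ((1 - a) * γ₂ - (γ₂ - ε) * (1 + 3/4*a)) * n := by
    have h := le_trans (le_max_right _ _) hnmax
    rw [div_le_iff₀ hδ'pos] at h; linarith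
  -- index facts
  set K := ⌈γ₂ * (n:ℝ)⌉₊ with hK_def
  have hKge : γ₂ * n ≤ (K:ℝ) := Nat.le_ceil _
  have hKle : K ≤ n := by
    refine Nat.ceil_le.mpr ?_
    have : γ₂ * n ≤ 1 * n := mul_le_mul_of_nonneg_right h2.le hn0.le
    linarith
  have hK2 : 2 ≤ K := by
    have : (2:ℝ) ≤ (K:ℝ) := by linarith
    exact_mod_cast this
  have hK1n : K - 1 < n := by omega
  set kidx : Fin n := ⟨K - 1, hK1n⟩ with hkidx
  have hsk : s kidx ≤ 0 := hs_k kidx (show K - 1 + 1 = K by omega)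
  -- alpha facts
  have hf0 : (f:ℝ) ≠ 0 := Nat.cast_ne_zero.mpr hf.ne'
  have hα0 : 0 < α := by rw [hα]; positivity
  have haf : α * f = a := by rw [hα, ha_def]; field_simp
  -- Phi
  have hΦ0 : 0 ≤ PhiB n α s := Finset.sum_nonneg fun i _ => (Real.exp_pos _).le
  -- head set
  set H := Finset.univ.filter (fun j : Fin n => j.1 + 1 < K) with hH_def
  have hHcard : #H = K - 1 := by
    have : H = Finset.Iio kidx := by
      ext j
      simp only [hH_def, Finset.mem_filter, Finset.mem_univ, true_and, Finset.mem_Iio,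
        Fin.lt_def, hkidx]
      omega
    rw [this, Fin.card_Iio]
  have hu0 : (0:ℝ) < γ₂ * n - 1 := by linarith
  have hum : γ₂ * n - 1 ≤ (#H : ℝ) := by
    rw [hHcard]
    have : ((K - 1 : ℕ) : ℝ) = (K:ℝ) - 1 := by
      rw [Nat.cast_sub (by omega)]; norm_num
    rw [this]; linarith
  set q : ℝ := (γ₂ - ε) / (γ₂ * n - 1) with hq_def
  have hq0 : 0 ≤ q := div_nonneg hγε0 hu0.le
  have hq1 : q ≤ 1 := by
    rw [hq_def, div_le_one hu0]; linarith
  have hqu : q * (γ₂ * n - 1) = γ₂ - ε := div_mul_cancel₀ _ hu0.ne'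
  -- Chebyshev on head
  have hanti : AntivaryOn p (fun j => Real.exp (α * s j)) ↑H := by
    intro i _ j _ hlt
    have h1 : α * s i < α * s j := Real.exp_lt_exp.mp hlt
    have h2' : s i < s j := lt_of_mul_lt_mul_left h1 hα0.le
    have h3' : j ≤ i := by
      by_contra hc
      push_neg at hc
      exact absurd (hs_mono i j hc.le) (not_le.mpr h2')
    exact hpmono h3'
  have hcheb := hanti.card_mul_sum_le_sum_mul_sum
  have hHb : ∑ j ∈ H, Real.exp (α * s j) ≤ PhiB n α s := by
    unfold PhiB
    exact Finset.sum_le_sum_of_subset_of_nonneg (Finset.filter_subset _ _)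
      (fun j _ _ => (Real.exp_pos _).le)
  have hHb0 : 0 ≤ ∑ j ∈ H, Real.exp (α * s j) :=
    Finset.sum_nonneg fun j _ => (Real.exp_pos _).le
  have hm0 : (0:ℝ) < (#H : ℝ) := lt_of_lt_of_le hu0 hum
  have hhead : ∑ j ∈ H, p j * Real.exp (α * s j) ≤ q * PhiB n α s := by
    have hstep : (#H : ℝ) * ∑ j ∈ H, p j * Real.exp (α * s j) ≤ (γ₂ - ε) * PhiB n α s :=
      le_trans hcheb (mul_le_mul hp2 hHb hHb0 hγε0)
    have h1 : ∑ j ∈ H, p j * Real.exp (α * s j) ≤ ((γ₂ - ε) * PhiB n α s) / (#H : ℝ) := by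
      rw [le_div_iff₀ hm0, mul_comm]; exact hstep
    refine le_trans h1 ?_
    rw [hq_def, div_mul_eq_mul_div]
    exact div_le_div_of_nonneg_left (mul_nonneg hγε0 hΦ0) hu0 hum
  -- tail
  have htail : ∑ j ∈ Finset.univ.filter (fun j : Fin n => ¬(j.1 + 1 < K)),
      p j * Real.exp (α * s j) ≤ 1 := by
    calc ∑ j ∈ Finset.univ.filter (fun j : Fin n => ¬(j.1 + 1 < K)), p j * Real.exp (α * s j)
        ≤ ∑ j ∈ Finset.univ.filter (fun j : Fin n => ¬(j.1 + 1 < K)), p j := by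
          refine Finset.sum_le_sum fun j hj => ?_
          have hjK : K ≤ j.1 + 1 := by
            have := (Finset.mem_filter.mp hj).2
            omega
          have hkj : kidx ≤ j := by
            rw [Fin.le_def]
            show K - 1 ≤ j.1
            omega
          have hsj : s j ≤ 0 := le_trans (hs_mono kidx j hkj) hsk
          have hαs : α * s j ≤ 0 := by
            have := mul_le_mul_of_nonneg_left hsj hα0.le
            simpa using this
          exact mul_le_of_le_one_right (hp0 j) (Real.exp_le_one_iff.mpr hαs)
      _ ≤ ∑ j, p j := Finset.sum_le_sum_of_subset_of_nonneg (Finset.filter_subset _ _)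
          (fun j _ _ => hp0 j)
      _ = 1 := hpsum
  have hS : ∑ j, p j * Real.exp (α * s j) ≤ q * PhiB n α s + 1 := by
    rw [← Finset.sum_filter_add_sum_filter_not Finset.univ (fun j : Fin n => j.1 + 1 < K)]
    exact add_le_add hhead htail
  -- scalar estimates
  set x : ℝ := a * (1 - 1/n) with hx_def
  set y : ℝ := a / n with hy_def
  have hinv : 1/(n:ℝ) ≤ 1 := by rw [div_le_one hn0]; linarith
  have hinv0 : (0:ℝ) < 1/(n:ℝ) := by positivity
  have hx0 : 0 ≤ x := by
    rw [hx_def]; exact mul_nonneg ha0.le (by linarith)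
  have hxa : x ≤ a := by
    rw [hx_def]
    have := mul_le_mul_of_nonneg_left (show (1:ℝ) - 1/n ≤ 1 by linarith) ha0.le
    simpa using this
  have hy0 : 0 ≤ y := by rw [hy_def]; positivity
  have hxy : x + y = a := by rw [hx_def, hy_def]; field_simp; ring
  have hyn : y * n = a := by rw [hy_def]; field_simp
  have hEx : Real.exp x ≤ 1 + x + 3/4 * x^2 :=
    exp_quad_bound (abs_le.mpr ⟨by linarith, by linarith⟩)
  have hEy : Real.exp (-y) ≤ 1 - y + 3/4 * y^2 := by
    have hya : y ≤ a := by rw [hy_def]; exact div_le_self ha0.le hnR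
    have h := exp_quad_bound (x := -y) (abs_le.mpr ⟨by linarith, by linarith⟩)
    have hsq : (-y)^2 = y^2 := by ring
    rw [hsq] at h
    linarith
  have hEy1 : 1 - y ≤ Real.exp (-y) := by
    have := Real.add_one_le_exp (-y)
    linarith
  have hD0 : 0 ≤ Real.exp x - Real.exp (-y) := by
    have h1 : Real.exp (-y) ≤ 1 := Real.exp_le_one_iff.mpr (by linarith)
    have h2'' : 1 ≤ Real.exp x := Real.one_le_exp hx0
    linarith
  have hD1 : Real.exp x - Real.exp (-y) ≤ 1 := by
    have hx2 : x^2 ≤ a^2 := pow_le_pow_left₀ hx0 hxa 2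
    have ha2 : a^2 ≤ (1/8)^2 := pow_le_pow_left₀ ha0.le ha8 2
    norm_num at ha2
    linarith
  -- polynomial inequality
  have hpoly : q*a + 3/4*y^2 + 3/4*a^2*q ≤ a/n - a^2/n := by
    rw [← sub_div, le_div_iff₀ hn0]
    have hmul : ((q*a + 3/4*y^2 + 3/4*a^2*q) * n) * (γ₂*n - 1)
        = (γ₂-ε)*a*n + 3/4*a^2*(γ₂-ε)*n + 3/4*γ₂*a^2 - 3/4*y*a := by
      linear_combination (a*(n:ℝ) + 3/4*a^2*n) * hqu + (3/4*(γ₂*(y*n+a) - y)) * hyn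
    have hrhs := aux_rhs (nr := (n:ℝ)) ha0 hy0 hCδ
    have hfin : ((q*a + 3/4*y^2 + 3/4*a^2*q) * n) * (γ₂*n - 1) ≤ (a - a^2) * (γ₂*n - 1) := by
      rw [hmul]; exact hrhs
    exact le_of_mul_le_mul_right hfin hu0
  -- final scalar bound
  have he1 : -(α*(f:ℝ))/n = -y := by rw [haf, hy_def]; ring
  have he2 : α*(f:ℝ)*(1-1/n) = x := by rw [haf, hx_def]
  have hD0' : 0 ≤ Real.exp (α*f*(1-1/n)) - Real.exp (-(α*f)/n) := by
    rw [he1, he2]; exact hD0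
  have hD1' : Real.exp (α*f*(1-1/n)) - Real.exp (-(α*f)/n) ≤ 1 := by
    rw [he1, he2]; exact hD1
  have hε2 : ε^2/(4*(n:ℝ)) = a^2/n := by rw [ha_def]; ring
  have hscalar : Real.exp (-(α*f)/n) + (Real.exp (α*f*(1-1/n)) - Real.exp (-(α*f)/n)) * q
      ≤ 1 - ε^2/(4*n) := by
    rw [hε2, he1, he2]
    exact aux_scalar hq0 hq1 hx0 hxa hy0 hxy hy_def hpoly hEy hEx
  -- assembly
  have expand : ∀ j : Fin n, p j * PhiB n α (upd n f s j)
      = (Real.exp (-(α*f)/n) * PhiB n α s) * p j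
        + (Real.exp (α*f*(1-1/n)) - Real.exp (-(α*f)/n)) * (p j * Real.exp (α * s j)) := by
    intro j
    rw [phi_upd_eq]; ring
  calc ∑ j : Fin n, p j * PhiB n α (sortDesc (upd n f s j))
      = ∑ j : Fin n, p j * PhiB n α (upd n f s j) :=
        Finset.sum_congr rfl fun j _ => by rw [phi_sortDesc]
    _ = Real.exp (-(α*f)/n) * PhiB n α s
        + (Real.exp (α*f*(1-1/n)) - Real.exp (-(α*f)/n)) * ∑ j, p j * Real.exp (α * s j) := by
        rw [Finset.sum_congr rfl (fun j _ => expand j), Finset.sum_add_distrib,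
          ← Finset.mul_sum, ← Finset.mul_sum, hpsum, mul_one]
    _ ≤ Real.exp (-(α*f)/n) * PhiB n α s
        + (Real.exp (α*f*(1-1/n)) - Real.exp (-(α*f)/n)) * (q * PhiB n α s + 1) :=
        add_le_add le_rfl (mul_le_mul_of_nonneg_left hS hD0')
    _ = (Real.exp (-(α*f)/n) + (Real.exp (α*f*(1-1/n)) - Real.exp (-(α*f)/n)) * q) * PhiB n α s
        + (Real.exp (α*f*(1-1/n)) - Real.exp (-(α*f)/n)) := by ring
    _ ≤ (1 - ε^2/(4*n)) * PhiB n α s + 1 :=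
        add_le_add (mul_le_mul_of_nonneg_right hscalar hΦ0) hD1'
end
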